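/- (Zassenhaus Lemma, star-regular form) Let C be a star-regular category with pushouts of regular epimorphisms satisfying property (*). For kernel stars κ : F* ⇉ U and σ : G* ⇉ V and monomorphisms u : U → A, v : V → A, there are isomorphisms (F* ∨_U (U∩V)) / (F* ∨_U M) ≅ (U∩V)/M ≅ (G* ∨_V (U∩V)) / (G* ∨_V M), where M = (F* ∩ (V×V))* ∨_{U∩V} (G* ∩ (U×U))* is the supremum of the two restricted kernel stars on U ∩ V. -/

import Mathlib

open CategoryTheory CategoryTheory.Limits

universe v u

namespace StarReg

variable {C : Type u} [Category.{v} C]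

/-- An ideal of morphisms in the sense of Ehresmann. -/
def IsIdealClass (N : MorphismProperty C) : Prop :=
  (∀ ⦃X Y Z : C⦄ (f : X ⟶ Y) (g : Y ⟶ Z), N f → N (f ≫ g)) ∧
  (∀ ⦃X Y Z : C⦄ (f : X ⟶ Y) (g : Y ⟶ Z), N g → N (f ≫ g))

/-- `k` is an `N`-kernel of `f`. -/
def IsNKernel (N : MorphismProperty C) {K X Y : C} (k : K ⟶ X) (f : X ⟶ Y) : Prop :=
  N (k ≫ f) ∧ ∀ ⦃L : C⦄ (g : L ⟶ X), N (g ≫ f) → ∃! μ : L ⟶ K, μ ≫ k = g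

def HasNKernels (N : MorphismProperty C) : Prop :=
  ∀ ⦃X Y : C⦄ (f : X ⟶ Y), ∃ (K : C) (k : K ⟶ X), IsNKernel N k f

/-- Every morphism factors as a regular epimorphism followed by a monomorphism. -/
def RegEpiMonoFactorisations (C : Type u) [Category.{v} C] : Prop :=
  ∀ ⦃X Y : C⦄ (f : X ⟶ Y), ∃ (Z : C) (e : X ⟶ Z) (m : Z ⟶ Y),
    Nonempty (RegularEpi e) ∧ Mono m ∧ e ≫ m = f

/-- Regular epimorphisms are stable under pullback. -/
def RegEpisPullbackStable (C : Type u) [Category.{v} C] : Prop :=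
  ∀ ⦃P X Y Z : C⦄ (fst : P ⟶ X) (snd : P ⟶ Y) (f : X ⟶ Z) (g : Y ⟶ Z),
    IsPullback fst snd f g → Nonempty (RegularEpi g) → Nonempty (RegularEpi fst)

/-- A star: a pair of parallel morphisms whose first component lies in `N`. -/
structure Star (N : MorphismProperty C) (X : C) where
  T : C
  a : T ⟶ X
  b : T ⟶ X
  ha : N a

/-- A monic star: the pair is jointly monomorphic. -/
def Star.Monic {N : MorphismProperty C} {X : C} (s : Star N X) : Prop :=
  ∀ ⦃W : C⦄ (u v : W ⟶ s.T), u ≫ s.a = v ≫ s.a → u ≫ s.b = v ≫ s.b → u = v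

/-- `s` is the kernel star of `f`. -/
def IsKernelStar {N : MorphismProperty C} {X Y : C} (f : X ⟶ Y) (s : Star N X) : Prop :=
  s.a ≫ f = s.b ≫ f ∧
  ∀ t : Star N X, t.a ≫ f = t.b ≫ f →
    ∃! u : t.T ⟶ s.T, u ≫ s.a = t.a ∧ u ≫ s.b = t.b

/-- `t` is the (regular epi, monic star) image of the star `s` along `f`. -/
def IsImageFact {N : MorphismProperty C} {X Y : C} (f : X ⟶ Y) (s : Star N X)
    (t : Star N Y) : Prop :=
  t.Monic ∧ ∃ e : s.T ⟶ t.T,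
    Nonempty (RegularEpi e) ∧ e ≫ t.a = s.a ≫ f ∧ e ≫ t.b = s.b ≫ f

/-- `f` is a coequaliser of the star `s`. -/
def IsStarCoequalizer {N : MorphismProperty C} {X Q : C} (s : Star N X) (f : X ⟶ Q) : Prop :=
  s.a ≫ f = s.b ≫ f ∧
  ∀ ⦃W : C⦄ (h : X ⟶ W), s.a ≫ h = s.b ≫ h → ∃! u : Q ⟶ W, f ≫ u = h

/-- `s` is the star `Δ*_X` of the discrete relation on `X`. -/
def IsDeltaStar {N : MorphismProperty C} {X : C} (s : Star N X) : Prop :=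
  s.a = s.b ∧ IsNKernel N s.a (𝟙 X)

def RegEpisAreStarCoequalizers (N : MorphismProperty C) : Prop :=
  ∀ ⦃X Y : C⦄ (f : X ⟶ Y), Nonempty (RegularEpi f) →
    ∃ s : Star N X, IsStarCoequalizer s f

/-- A star-regular category: regular multi-pointed with `N`-kernels, every regular
epimorphism a coequaliser of a star. -/
def StarRegular (N : MorphismProperty C) : Prop :=
  IsIdealClass N ∧ HasNKernels N ∧ RegEpiMonoFactorisations C ∧
    RegEpisPullbackStable C ∧ RegEpisAreStarCoequalizers N

def HasKernelStarCoequalizers (N : MorphismProperty C) : Prop :=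
  ∀ ⦃X Y : C⦄ (f : X ⟶ Y) (s : Star N X), IsKernelStar f s →
    ∃ (Q : C) (q : X ⟶ Q), IsStarCoequalizer s q

/-- `f` is saturating: the image of `Δ*` along `f` is `Δ*`. -/
def Saturating (N : MorphismProperty C) {X Y : C} (f : X ⟶ Y) : Prop :=
  ∀ (s : Star N X) (t : Star N Y), IsDeltaStar s → IsImageFact f s t → IsDeltaStar t

/-- The diamond `e ≫ g = f ≫ h` is right saturated: `f(E*) = H*`. -/
def RightSaturated (N : MorphismProperty C) {X Y Z W : C}
    (e : X ⟶ Z) (f : X ⟶ Y) (_g : Z ⟶ W) (h : Y ⟶ W) : Prop :=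
  ∀ (s : Star N X) (t : Star N Y), IsKernelStar e s → IsImageFact f s t → IsKernelStar h t

/-- The diamond `e ≫ g = f ≫ h` is left saturated: `e(F*) = G*`. -/
def LeftSaturated (N : MorphismProperty C) {X Y Z W : C}
    (e : X ⟶ Z) (f : X ⟶ Y) (g : Z ⟶ W) (_h : Y ⟶ W) : Prop :=
  ∀ (s : Star N X) (t : Star N Z), IsKernelStar f s → IsImageFact e s t → IsKernelStar g t

/-- `s` is a kernel star (of some morphism). -/
def IsAKernelStar {N : MorphismProperty C} {X : C} (s : Star N X) : Prop :=
  ∃ (W : C) (w : X ⟶ W), IsKernelStar w s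

/-- Inclusion of stars on the same object. -/
def StarLE {N : MorphismProperty C} {X : C} (s t : Star N X) : Prop :=
  ∃ m : s.T ⟶ t.T, m ≫ t.a = s.a ∧ m ≫ t.b = s.b

/-- Property (*): images along coequalisers of smaller kernel stars of kernel stars are
kernel stars. -/
def PropertyStar (N : MorphismProperty C) : Prop :=
  ∀ ⦃A Q : C⦄ (F G : Star N A) (f : A ⟶ Q),
    IsKernelStar f F → IsStarCoequalizer F f → IsAKernelStar G → StarLE F G →
    ∀ t : Star N Q, IsImageFact f G t → IsAKernelStar t

/-- `σ` (with comparison `j`) is the star-pullback of `τ` along `g`. -/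
def IsStarPullback {N : MorphismProperty C} {X Y : C} (g : X ⟶ Y) (τ : Star N Y)
    (σ : Star N X) (j : σ.T ⟶ τ.T) : Prop :=
  σ.a ≫ g = j ≫ τ.a ∧ σ.b ≫ g = j ≫ τ.b ∧
  ∀ (ρ : Star N X) (w : ρ.T ⟶ τ.T), ρ.a ≫ g = w ≫ τ.a → ρ.b ≫ g = w ≫ τ.b →
    ∃! h : ρ.T ⟶ σ.T, h ≫ σ.a = ρ.a ∧ h ≫ σ.b = ρ.b ∧ h ≫ j = w

def HasRegEpiPushouts (C : Type u) [Category.{v} C] : Prop :=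
  ∀ ⦃X Y Z : C⦄ (f : X ⟶ Y) (g : X ⟶ Z), Nonempty (RegularEpi f) → Nonempty (RegularEpi g) →
    ∃ (W : C) (p : Y ⟶ W) (q : Z ⟶ W), IsPushout f g p q

end StarReg

namespace StarReg

variable {C : Type u} [Category.{v} C] {N : MorphismProperty C}

/-- A star coequalizer is an epimorphism. -/
lemma starCoeq_epi {X Q : C} {s : Star N X} {f : X ⟶ Q}
    (h : IsStarCoequalizer s f) : Epi f := by
  constructor
  intro Z g g' hgg
  have h1 : s.a ≫ f ≫ g = s.b ≫ f ≫ g := by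
    rw [← Category.assoc, h.1, Category.assoc]
  obtain ⟨u, _, huniq⟩ := h.2 (f ≫ g) h1
  rw [huniq g rfl, huniq g' hgg.symm]

/-- A star coequalizer is a regular epimorphism. -/
lemma starCoeq_regularEpi {X Q : C} {s : Star N X} {f : X ⟶ Q}
    (h : IsStarCoequalizer s f) : Nonempty (RegularEpi f) := by
  refine ⟨⟨s.T, s.a, s.b, h.1, ?_⟩⟩
  refine Cofork.IsColimit.mk _ (fun c => (h.2 c.π c.condition).exists.choose)
    (fun c => ?_) (fun c m hm => ?_)
  · exact (h.2 c.π c.condition).exists.choose_spec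
  · exact (h.2 c.π c.condition).unique hm (h.2 c.π c.condition).exists.choose_spec

/-- One half of the Zassenhaus lemma. -/
lemma zassenhaus_side
    (hid : IsIdealClass N) (hker : HasNKernels N)
    (hstab : RegEpisPullbackStable C) (hrc : RegEpisAreStarCoequalizers N)
    (hps : PropertyStar N)
    {U QU W D QM WU P₁ Q₁ : C} (F : Star N U) (fU : U ⟶ QU)
    (hFk : IsKernelStar fU F) (hfUc : IsStarCoequalizer F fU)
    (iU : W ⟶ U)
    (R : Star N W) (j : R.T ⟶ F.T) (hR : IsStarPullback iU F R j)
    (dM : W ⟶ D) (M : Star N W) (hM : IsKernelStar dM M)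
    (hRd : R.a ≫ dM = R.b ≫ dM)
    (qM : W ⟶ QM) (hqM : IsStarCoequalizer M qM)
    (e₁ : W ⟶ WU) (n₁ : WU ⟶ QU) (he₁ : Nonempty (RegularEpi e₁)) (hn₁ : Mono n₁)
    (hfact₁ : e₁ ≫ n₁ = iU ≫ fU)
    (pI₁ : P₁ ⟶ WU) (pA₁ : P₁ ⟶ U) (hP₁ : IsPullback pI₁ pA₁ n₁ fU)
    (H₁ : Star N WU) (hH₁ : IsImageFact e₁ M H₁)
    (S₁ : Star N P₁) (jS₁ : S₁.T ⟶ H₁.T) (hS₁ : IsStarPullback pI₁ H₁ S₁ jS₁)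
    (qP₁ : P₁ ⟶ Q₁) (hqP₁ : IsStarCoequalizer S₁ qP₁) :
    Nonempty (Q₁ ≅ QM) := by
  haveI epi_qM : Epi qM := starCoeq_epi hqM
  haveI epi_qP : Epi qP₁ := starCoeq_epi hqP₁
  haveI epi_e₁ : Epi e₁ := by
    obtain ⟨re⟩ := he₁; haveI := re; exact RegularEpi.epi e₁ re
  -- R is the kernel star of e₁
  have hRke : IsKernelStar e₁ R := by
    constructor
    · rw [← cancel_mono n₁, Category.assoc, Category.assoc, hfact₁,
        ← Category.assoc, hR.1, ← Category.assoc, hR.2.1,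
        Category.assoc, Category.assoc, hFk.1]
    · intro t ht
      have ht' : (t.a ≫ iU) ≫ fU = (t.b ≫ iU) ≫ fU := by
        rw [Category.assoc, Category.assoc, ← hfact₁, ← Category.assoc, ht, Category.assoc]
      obtain ⟨wF, hwF, hwFu⟩ :=
        hFk.2 ⟨t.T, t.a ≫ iU, t.b ≫ iU, hid.1 t.a iU t.ha⟩ ht'
      have hwF1 : wF ≫ F.a = t.a ≫ iU := hwF.1
      have hwF2 : wF ≫ F.b = t.b ≫ iU := hwF.2
      obtain ⟨h, ⟨hh1, hh2, hh3⟩, hhu⟩ := hR.2.2 t wF hwF1.symm hwF2.symm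
      refine ⟨h, ⟨hh1, hh2⟩, ?_⟩
      rintro h' ⟨hh1', hh2'⟩
      have hj' : h' ≫ j = wF := by
        refine hwFu (h' ≫ j) ⟨?_, ?_⟩
        · show (h' ≫ j) ≫ F.a = t.a ≫ iU
          rw [Category.assoc, ← hR.1, ← Category.assoc, hh1']
        · show (h' ≫ j) ≫ F.b = t.b ≫ iU
          rw [Category.assoc, ← hR.2.1, ← Category.assoc, hh2']
      exact hhu h' ⟨hh1', hh2', hj'⟩
  -- e₁ is a star coequalizer of R
  have hRce : IsStarCoequalizer R e₁ := by
    obtain ⟨re⟩ := he₁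
    obtain ⟨s0, hs0⟩ := hrc e₁ ⟨re⟩
    obtain ⟨m0, ⟨hm01, hm02⟩, _⟩ := hRke.2 s0 hs0.1
    refine ⟨hRke.1, ?_⟩
    intro X h hh
    exact hs0.2 h (by rw [← hm01, ← hm02, Category.assoc, Category.assoc, hh])
  -- R ≤ M
  obtain ⟨m, ⟨hm1, hm2⟩, _⟩ := hM.2 R hRd
  -- H₁ is a kernel star, by property (*)
  obtain ⟨Z, z₁, hz⟩ := hps R M e₁ hRke hRce ⟨D, dM, hM⟩ ⟨m, hm1, hm2⟩ H₁ hH₁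
  obtain ⟨hmon, eM, ⟨reM⟩, heMa, heMb⟩ := hH₁
  haveI := reM
  haveI epi_eM : Epi eM := RegularEpi.epi eM reM
  -- qM coequalizes R, giving w : WU ⟶ QM
  have hRqM : R.a ≫ qM = R.b ≫ qM := by
    rw [← hm1, ← hm2, Category.assoc, Category.assoc, hqM.1]
  obtain ⟨w, hw, hwu⟩ := hRce.2 qM hRqM
  -- w coequalizes H₁
  have hH₁w : H₁.a ≫ w = H₁.b ≫ w := by
    rw [← cancel_epi eM, ← Category.assoc, heMa, ← Category.assoc, heMb,
      Category.assoc, Category.assoc, hw, hqM.1]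
  -- ψ : Q₁ ⟶ QM
  have hS₁qw : S₁.a ≫ pI₁ ≫ w = S₁.b ≫ pI₁ ≫ w := by
    rw [← Category.assoc, hS₁.1, ← Category.assoc, hS₁.2.1,
      Category.assoc, Category.assoc, hH₁w]
  obtain ⟨ψ, hψ, hψu⟩ := hqP₁.2 (pI₁ ≫ w) hS₁qw
  -- w₁ : W ⟶ P₁ and φ : QM ⟶ Q₁
  set w₁ : W ⟶ P₁ := hP₁.lift e₁ iU hfact₁ with hw₁def
  have hw₁I : w₁ ≫ pI₁ = e₁ := hP₁.lift_fst e₁ iU hfact₁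
  obtain ⟨hL, hLh, _⟩ :=
    hS₁.2.2 ⟨M.T, M.a ≫ w₁, M.b ≫ w₁, hid.1 M.a w₁ M.ha⟩ eM
      (show (M.a ≫ w₁) ≫ pI₁ = eM ≫ H₁.a by rw [Category.assoc, hw₁I, heMa])
      (show (M.b ≫ w₁) ≫ pI₁ = eM ≫ H₁.b by rw [Category.assoc, hw₁I, heMb])
  have hL1 : hL ≫ S₁.a = M.a ≫ w₁ := hLh.1
  have hL2 : hL ≫ S₁.b = M.b ≫ w₁ := hLh.2.1
  have hMcoeq : M.a ≫ w₁ ≫ qP₁ = M.b ≫ w₁ ≫ qP₁ := by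
    rw [← Category.assoc, ← hL1, ← Category.assoc (M.b), ← hL2,
      Category.assoc, Category.assoc, hqP₁.1]
  obtain ⟨φ, hφ, hφu⟩ := hqM.2 (w₁ ≫ qP₁) hMcoeq
  -- pI₁ is a regular epi, star coequalizer of some s with s ≤ S₁
  obtain ⟨s, hs⟩ := hrc pI₁ (hstab pI₁ pA₁ n₁ fU hP₁ (starCoeq_regularEpi hfUc))
  obtain ⟨K, k, hk⟩ := hker (𝟙 WU)
  have hNk : N k := by simpa using hk.1
  obtain ⟨δ, hδ, _⟩ := hz.2 ⟨K, k, k, hNk⟩ rfl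
  have hδ1 : δ ≫ H₁.a = k := hδ.1
  have hδ2 : δ ≫ H₁.b = k := hδ.2
  obtain ⟨μ, hμ, _⟩ := hk.2 (s.a ≫ pI₁) (by simpa using hid.1 s.a pI₁ s.ha)
  obtain ⟨hL2m, ⟨hL21, hL22, _⟩, _⟩ :=
    hS₁.2.2 s (μ ≫ δ) (by rw [Category.assoc, hδ1, hμ])
      (by rw [Category.assoc, hδ2, hμ, hs.1])
  have hsq : s.a ≫ qP₁ = s.b ≫ qP₁ := by
    rw [← hL21, ← hL22, Category.assoc, Category.assoc, hqP₁.1]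
  obtain ⟨w₂, hw₂, hw₂u⟩ := hs.2 qP₁ hsq
  -- the two maps are mutually inverse
  have hwφ : w ≫ φ = w₂ := by
    rw [← cancel_epi e₁, ← Category.assoc, hw, hφ, ← hw₂, ← Category.assoc, hw₁I]
  have h1 : ψ ≫ φ = 𝟙 Q₁ := by
    rw [← cancel_epi qP₁, ← Category.assoc, hψ, Category.assoc, hwφ, hw₂, Category.comp_id]
  have h2 : φ ≫ ψ = 𝟙 QM := by
    rw [← cancel_epi qM, ← Category.assoc, hφ, Category.assoc, hψ, ← Category.assoc,
      hw₁I, hw, Category.comp_id]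
  exact ⟨⟨ψ, φ, h1, h2⟩⟩

end StarReg


open CategoryTheory CategoryTheory.Limits StarReg in
/-- The Zassenhaus Lemma in a star-regular category with pushouts of regular
epimorphisms satisfying property (*). -/
theorem statement13 {C : Type u} [Category.{v} C] (N : MorphismProperty C)
    (hfl : HasFiniteLimits C) (hsr : StarRegular N) (hps : PropertyStar N)
    (hpo : HasRegEpiPushouts C)
    -- kernel stars `F*` on `U` and `G*` on `V`, monos `u : U ⟶ A`, `v : V ⟶ A`
    {U V A : C} (F : Star N U) (G : Star N V)
    (u : U ⟶ A) (v : V ⟶ A) (hu : Mono u) (hv : Mono v)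
    -- coequalisers of `F*` and `G*` (of which they are the kernel stars)
    {QU : C} (fU : U ⟶ QU) (hFk : IsKernelStar fU F) (hfUc : IsStarCoequalizer F fU)
    {QV : C} (gV : V ⟶ QV) (hGk : IsKernelStar gV G) (hgVc : IsStarCoequalizer G gV)
    -- the intersection `W = U ∩ V`
    {W : C} (iU : W ⟶ U) (iV : W ⟶ V) (hW : IsPullback iU iV u v)
    -- the restricted stars `(F* ∩ (V×V))*` and `(G* ∩ (U×U))*` on `W`
    (R₁ : Star N W) (j₁ : R₁.T ⟶ F.T) (hR₁ : IsStarPullback iU F R₁ j₁)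
    (R₂ : Star N W) (j₂ : R₂.T ⟶ G.T) (hR₂ : IsStarPullback iV G R₂ j₂)
    -- their coequalisers and the pushout, with diagonal `q`
    {W₁ : C} (f₁ : W ⟶ W₁) (hf₁ : IsStarCoequalizer R₁ f₁)
    {W₂ : C} (g₁ : W ⟶ W₂) (hg₁ : IsStarCoequalizer R₂ g₁)
    {Tq : C} (p₁ : W₁ ⟶ Tq) (p₂ : W₂ ⟶ Tq) (hpush : IsPushout f₁ g₁ p₁ p₂)
    -- the supremum `M = (F* ∩ (V×V))* ∨ (G* ∩ (U×U))*`: kernel star of the diagonal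
    (M : Star N W) (hM : IsKernelStar (f₁ ≫ p₁) M)
    -- the middle quotient `(U∩V)/M`
    {QM : C} (qM : W ⟶ QM) (hqM : IsStarCoequalizer M qM)
    -- the U-side: image `fU(U∩V)`, join `P₁ = F* ∨_U (U∩V)`, image star of `M`,
    -- star `S₁ = F* ∨_U M` and its quotient
    {WU : C} (e₁ : W ⟶ WU) (n₁ : WU ⟶ QU) (he₁ : Nonempty (RegularEpi e₁)) (hn₁ : Mono n₁)
    (hfact₁ : e₁ ≫ n₁ = iU ≫ fU)
    {P₁ : C} (pI₁ : P₁ ⟶ WU) (pA₁ : P₁ ⟶ U) (hP₁ : IsPullback pI₁ pA₁ n₁ fU)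
    (H₁ : Star N WU) (hH₁ : IsImageFact e₁ M H₁)
    (S₁ : Star N P₁) (jS₁ : S₁.T ⟶ H₁.T) (hS₁ : IsStarPullback pI₁ H₁ S₁ jS₁)
    {Q₁ : C} (qP₁ : P₁ ⟶ Q₁) (hqP₁ : IsStarCoequalizer S₁ qP₁)
    -- the V-side, analogously
    {WV : C} (e₂ : W ⟶ WV) (n₂ : WV ⟶ QV) (he₂ : Nonempty (RegularEpi e₂)) (hn₂ : Mono n₂)
    (hfact₂ : e₂ ≫ n₂ = iV ≫ gV)
    {P₂ : C} (pI₂ : P₂ ⟶ WV) (pA₂ : P₂ ⟶ V) (hP₂ : IsPullback pI₂ pA₂ n₂ gV)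
    (H₂ : Star N WV) (hH₂ : IsImageFact e₂ M H₂)
    (S₂ : Star N P₂) (jS₂ : S₂.T ⟶ H₂.T) (hS₂ : IsStarPullback pI₂ H₂ S₂ jS₂)
    {Q₂ : C} (qP₂ : P₂ ⟶ Q₂) (hqP₂ : IsStarCoequalizer S₂ qP₂) :
    Nonempty (Q₁ ≅ QM) ∧ Nonempty (QM ≅ Q₂) := by
  refine ⟨?_, ?_⟩
  · exact StarReg.zassenhaus_side hsr.1 hsr.2.1 hsr.2.2.2.1 hsr.2.2.2.2 hps F fU hFk hfUc
      iU R₁ j₁ hR₁ (f₁ ≫ p₁) M hM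
      (by rw [← Category.assoc, hf₁.1, Category.assoc]) qM hqM e₁ n₁ he₁ hn₁ hfact₁
      pI₁ pA₁ hP₁ H₁ hH₁ S₁ jS₁ hS₁ qP₁ hqP₁
  · obtain ⟨i⟩ := StarReg.zassenhaus_side hsr.1 hsr.2.1 hsr.2.2.2.1 hsr.2.2.2.2 hps G gV
      hGk hgVc iV R₂ j₂ hR₂ (g₁ ≫ p₂) M (hpush.w ▸ hM)
      (by rw [← Category.assoc, hg₁.1, Category.assoc]) qM hqM e₂ n₂ he₂ hn₂ hfact₂
      pI₂ pA₂ hP₂ H₂ hH₂ S₂ jS₂ hS₂ qP₂ hqP₂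
    exact ⟨i.symm⟩
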